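/- Let p ≥ 1 be a real number, φ = π/(2p + 2), s = sin φ, and s_j = sin(jφ) for integers j. For integers r ≥ 1 define the 2×2 real matrices A_r = [[0, −s/s_{r+1}], [0, 0]], B_r = [[−s_{r+1}/s_r, 0], [0, −s_r/s_{r+1}]], D_r = [[0, 0], [s/s_r, 0]], P⁺_r = [[1, 0], [0, s_r/s_{r+1}]], P⁻_r = [[−s_{r+1}/s_r, 0], [0, −1]]. Then for every integer r with 1 ≤ r ≤ 2p − 1 the DN equations on [r, r+1] hold: P⁻_{r+1}·A_{r+1} = A_r·P⁻_{r+1}, P⁺_r·D_r = D_{r+1}·P⁺_r, B_r = P⁻_{r+1}·P⁺_r + A_r·D_r, and B_{r+1} = P⁺_r·P⁻_{r+1} + D_{r+1}·A_{r+1}. -/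

import Mathlib

open Matrix

/-- `s_j = sin (j·φ)` with `φ = π/(2p+2)`. -/
noncomputable def sj (p : ℝ) (j : ℕ) : ℝ := Real.sin (j * (Real.pi / (2 * p + 2)))

noncomputable def trigA (p : ℝ) (r : ℕ) : Matrix (Fin 2) (Fin 2) ℝ :=
  !![0, -(sj p 1) / sj p (r + 1); 0, 0]

noncomputable def trigB (p : ℝ) (r : ℕ) : Matrix (Fin 2) (Fin 2) ℝ :=
  !![-(sj p (r + 1)) / sj p r, 0; 0, -(sj p r) / sj p (r + 1)]

noncomputable def trigD (p : ℝ) (r : ℕ) : Matrix (Fin 2) (Fin 2) ℝ :=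
  !![0, 0; sj p 1 / sj p r, 0]

noncomputable def trigPp (p : ℝ) (r : ℕ) : Matrix (Fin 2) (Fin 2) ℝ :=
  !![1, 0; 0, sj p r / sj p (r + 1)]

noncomputable def trigPm (p : ℝ) (r : ℕ) : Matrix (Fin 2) (Fin 2) ℝ :=
  !![-(sj p (r + 1)) / sj p r, 0; 0, -1]

lemma trig_id (a b : ℝ) :
    Real.sin a * Real.sin (a + 2 * b) + Real.sin b ^ 2 = Real.sin (a + b) ^ 2 := by
  rw [show a + 2 * b = (a + b) + b by ring, Real.sin_add (a + b) b,
    Real.sin_add a b, Real.cos_add a b]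
  linear_combination (-(Real.sin b) ^ 2) * Real.sin_sq_add_cos_sq a

lemma sj_pos (p : ℝ) (hp : 1 ≤ p) (j : ℕ) (hj : 1 ≤ j) (hj2 : (j : ℝ) ≤ 2 * p + 1) :
    0 < sj p j := by
  have hphi : 0 < Real.pi / (2 * p + 2) := by positivity
  apply Real.sin_pos_of_pos_of_lt_pi
  · have : (1 : ℝ) ≤ (j : ℝ) := by exact_mod_cast hj
    nlinarith
  · have hlt : (j : ℝ) < 2 * p + 2 := by linarith
    calc (j : ℝ) * (Real.pi / (2 * p + 2)) < (2 * p + 2) * (Real.pi / (2 * p + 2)) := by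
          apply mul_lt_mul_of_pos_right hlt hphi
      _ = Real.pi := by field_simp

theorem stmt17 (p : ℝ) (hp : 1 ≤ p) :
    ∀ r : ℕ, 1 ≤ r → (r : ℝ) ≤ 2 * p - 1 →
      trigPm p (r + 1) * trigA p (r + 1) = trigA p r * trigPm p (r + 1) ∧
      trigPp p r * trigD p r = trigD p (r + 1) * trigPp p r ∧
      trigB p r = trigPm p (r + 1) * trigPp p r + trigA p r * trigD p r ∧
      trigB p (r + 1) = trigPp p r * trigPm p (r + 1) + trigD p (r + 1) * trigA p (r + 1) := by
  intro r hr hr2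
  have hrR : (1 : ℝ) ≤ (r : ℝ) := by exact_mod_cast hr
  have h0 : 0 < sj p r := sj_pos p hp r hr (by linarith)
  have h1 : 0 < sj p (r + 1) := sj_pos p hp (r + 1) (by omega) (by push_cast; linarith)
  have h2 : 0 < sj p (r + 2) := sj_pos p hp (r + 2) (by omega) (by push_cast; linarith)
  have hs : 0 < sj p 1 := sj_pos p hp 1 le_rfl (by push_cast; linarith)
  have hkey : sj p r * sj p (r + 2) + sj p 1 ^ 2 = sj p (r + 1) ^ 2 := by
    have := trig_id ((r : ℝ) * (Real.pi / (2 * p + 2))) (Real.pi / (2 * p + 2))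
    simp only [sj]
    push_cast
    convert this using 3 <;> ring
  have hkey2 : sj p r * sj p (r + 1 + 1) + sj p 1 ^ 2 = sj p (r + 1) ^ 2 := hkey
  have h0' := h0.ne'
  have h1' := h1.ne'
  have h2' := h2.ne'
  refine ⟨?_, ?_, ?_, ?_⟩ <;>
    · ext i j
      fin_cases i <;> fin_cases j <;>
        simp [trigA, trigB, trigD, trigPp, trigPm, Matrix.mul_apply, Fin.sum_univ_two] <;>
        field_simp <;>
        first
          | ring1
          | linear_combination (sj p r * sj p (r + 1)) * hkey2
          | linear_combination (sj p (r + 1) * sj p (r + 1 + 1)) * hkey2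
          | linear_combination hkey2
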